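/- In the maximal volume algorithm, if row j of the current r×r submatrix A_l (chosen from the rows of an n×r matrix M) is replaced by row i of M, where b_{ij} is the (i,j) entry of B_l = M·A_l^{-1}, then det(A_{l+1}) = b_{ij} · det(A_l); hence if |b_{ij}| > 1 the volume strictly increases, and since all submatrix volumes are bounded above (by Hadamard's inequality), the sequence vol(A_l) converges. -/

import Mathlib

open Matrix BigOperators Filter

noncomputable def sval {m n : ℕ} (A : Matrix (Fin m) (Fin n) ℝ) (k : Fin n) : ℝ :=
  Real.sqrt ((show (Aᵀ * A).IsHermitian by simpa using Matrix.isHermitian_conjTranspose_mul_self A).eigenvalues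
    (Tuple.sort (show (Aᵀ * A).IsHermitian by simpa using Matrix.isHermitian_conjTranspose_mul_self A).eigenvalues (Fin.rev k)))

noncomputable def chebNorm {m n : ℕ} (A : Matrix (Fin m) (Fin n) ℝ) : ℝ :=
  ⨆ i, ⨆ j, |A i j|

noncomputable def frobNorm {m n : ℕ} (A : Matrix (Fin m) (Fin n) ℝ) : ℝ :=
  Real.sqrt (∑ i, ∑ j, (A i j) ^ 2)

lemma det_updateRow_one {r : ℕ} (j : Fin r) (v : Fin r → ℝ) :
    ((1 : Matrix (Fin r) (Fin r) ℝ).updateRow j v).det = v j := by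
  have h1 : (1 : Matrix (Fin r) (Fin r) ℝ).updateRow j v
      = ((1 : Matrix (Fin r) (Fin r) ℝ).updateCol j v)ᵀ := by
    rw [← Matrix.updateRow_transpose, Matrix.transpose_one]
  rw [h1, Matrix.det_transpose, ← Matrix.cramer_apply, Matrix.cramer_one]
  rfl

lemma key {n r : ℕ} (M : Matrix (Fin n) (Fin r) ℝ) (S : Fin r → Fin n)
    (hinv : IsUnit (M.submatrix S id)) (i : Fin n) (j : Fin r) :
    (M.submatrix (Function.update S j i) id).det
        = (M * (M.submatrix S id)⁻¹) i j * (M.submatrix S id).det := by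
  set A := M.submatrix S id with hA
  set B := M * A⁻¹ with hB
  have hsub : M.submatrix (Function.update S j i) id
      = (B.submatrix (Function.update S j i) id) * A := by
    have hM : B * A = M := by
      rw [hB, Matrix.mul_assoc, Matrix.nonsing_inv_mul _ ((Matrix.isUnit_iff_isUnit_det _).mp hinv), Matrix.mul_one]
    ext k c
    rw [← hM]
    simp [Matrix.mul_apply, Matrix.submatrix_apply]
  have hBsub : B.submatrix (Function.update S j i) id
      = (1 : Matrix (Fin r) (Fin r) ℝ).updateRow j (B i) := by
    ext k c
    rcases eq_or_ne k j with rfl | hk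
    · simp
    · simp only [Matrix.submatrix_apply, Function.update_of_ne hk, id_eq,
        Matrix.updateRow_ne hk]
      have : B (S k) c = (A * A⁻¹) k c := by
        simp [hB, hA, Matrix.mul_apply, Matrix.submatrix_apply]
      rw [this, Matrix.mul_nonsing_inv _ ((Matrix.isUnit_iff_isUnit_det _).mp hinv)]
  rw [hsub, Matrix.det_mul, hBsub, det_updateRow_one]

theorem stmt18 {n r : ℕ} (hr : r < n) (M : Matrix (Fin n) (Fin r) ℝ)
    (S : Fin r → Fin n) (hS : Function.Injective S)
    (hinv : IsUnit (M.submatrix S id)) (i : Fin n) (j : Fin r) :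
    (M.submatrix (Function.update S j i) id).det
        = (M * (M.submatrix S id)⁻¹) i j * (M.submatrix S id).det ∧
      (1 < |(M * (M.submatrix S id)⁻¹) i j| →
        |(M.submatrix S id).det| < |(M.submatrix (Function.update S j i) id).det|) ∧
      ∀ T : ℕ → (Fin r → Fin n),
        Monotone (fun l => |(M.submatrix (T l) id).det|) →
          ∃ L, Tendsto (fun l => |(M.submatrix (T l) id).det|) atTop (nhds L) := by
  have hdet := key M S hinv i j
  refine ⟨hdet, ?_, ?_⟩
  · intro hb
    have hdA : (M.submatrix S id).det ≠ 0 := ((Matrix.isUnit_iff_isUnit_det _).mp hinv).ne_zero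
    have hpos : 0 < |(M.submatrix S id).det| := abs_pos.mpr hdA
    calc |(M.submatrix S id).det| = 1 * |(M.submatrix S id).det| := (one_mul _).symm
      _ < |(M * (M.submatrix S id)⁻¹) i j| * |(M.submatrix S id).det| := by
          exact mul_lt_mul_of_pos_right hb hpos
      _ = |(M.submatrix (Function.update S j i) id).det| := by
          rw [hdet, abs_mul]
  · intro T hmono
    set F : (Fin r → Fin n) → ℝ := fun f => |(M.submatrix f id).det| with hF
    have hbdd : BddAbove (Set.range fun l => F (T l)) := by
      refine (Set.finite_range F).bddAbove.mono ?_
      rintro x ⟨l, rfl⟩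
      exact ⟨T l, rfl⟩
    exact ⟨_, tendsto_atTop_ciSup hmono hbdd⟩
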